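/- Each symmetry s_g preserves the symplectic form ω = 2 da ∧ dt + ω₀: i.e. s_g^* ω = ω, where ω₀ = Σ_{i=1}^d dn_i ∧ dm_i in coordinates v = (n,m). -/

import Mathlib

open Real
noncomputable section

abbrev G (d : ℕ) := ℝ × ((Fin d → ℝ) × (Fin d → ℝ)) × ℝ

/-- The standard symplectic form on ℝ^{2d}, with v = (n, m). -/
def omega0 {d : ℕ} (v w : (Fin d → ℝ) × (Fin d → ℝ)) : ℝ :=
  ∑ i, (v.1 i * w.2 i - v.2 i * w.1 i)

/-- The group law (a,v,t)(a',v',t') = (a+a', e^{-a'}v+v', e^{-2a'}t+t'+(1/2)e^{-a'}ω₀(v,v')). -/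
def gmul {d : ℕ} (g h : G d) : G d :=
  (g.1 + h.1, Real.exp (-h.1) • g.2.1 + h.2.1,
    Real.exp (-(2 * h.1)) * g.2.2 + h.2.2 + (1/2) * Real.exp (-h.1) * omega0 g.2.1 h.2.1)

/-- The identity element (0,0,0). -/
def gone {d : ℕ} : G d := (0, 0, 0)

/-- The inverse (a,v,t)^{-1} = (-a, -e^a v, -e^{2a} t). -/
def ginv {d : ℕ} (g : G d) : G d :=
  (-g.1, -(Real.exp g.1 • g.2.1), -(Real.exp (2 * g.1) * g.2.2))

/-- The symmetry s_g at the point g. -/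
def ssym {d : ℕ} (g g' : G d) : G d :=
  (2 * g.1 - g'.1, (2 * Real.cosh (g.1 - g'.1)) • g.2.1 - g'.2.1,
    2 * g.2.2 * Real.cosh (2 * g.1 - 2 * g'.1) - g'.2.2
      + omega0 g.2.1 g'.2.1 * Real.sinh (g.1 - g'.1))

/-- The two-point phase S(g₁,g₂). -/
def Sph {d : ℕ} (g₁ g₂ : G d) : ℝ :=
  Real.sinh (2 * g₁.1) * g₂.2.2 - Real.sinh (2 * g₂.1) * g₁.2.2
    + Real.cosh g₁.1 * Real.cosh g₂.1 * omega0 g₁.2.1 g₂.2.1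

/-- The two-point amplitude A(g₁,g₂). -/
def Aamp {d : ℕ} (g₁ g₂ : G d) : ℝ :=
  (Real.cosh g₁.1 * Real.cosh g₂.1 * Real.cosh (g₁.1 - g₂.1)) ^ d *
    Real.sqrt (Real.cosh (2 * g₁.1) * Real.cosh (2 * g₂.1) * Real.cosh (2 * g₁.1 - 2 * g₂.1))

/-- The two-point kernel K_θ(g₁,g₂) = (4/(πθ)^{2d+2}) A(g₁,g₂) exp((2i/θ) S(g₁,g₂)). -/
def Kker {d : ℕ} (θ : ℝ) (g₁ g₂ : G d) : ℂ :=
  (4 / (Real.pi * θ) ^ (2 * d + 2) : ℝ) * (Aamp g₁ g₂ : ℝ) *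
    Complex.exp ((2 * Complex.I / (θ : ℂ)) * (Sph g₁ g₂ : ℝ))

/-- The constant symplectic form ω = 2 da∧dt + ω₀ evaluated on tangent vectors. -/
def omg {d : ℕ} (X Y : G d) : ℝ :=
  2 * (X.1 * Y.2.2 - Y.1 * X.2.2) + omega0 X.2.1 Y.2.1

section helper
variable {d : ℕ}

lemma omega0_add_right (n v w : (Fin d → ℝ) × (Fin d → ℝ)) :
    omega0 n (v + w) = omega0 n v + omega0 n w := by
  simp only [omega0, Prod.fst_add, Prod.snd_add, Pi.add_apply, ← Finset.sum_add_distrib]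
  exact Finset.sum_congr rfl fun i _ => by ring

lemma omega0_smul_right (c : ℝ) (n v : (Fin d → ℝ) × (Fin d → ℝ)) :
    omega0 n (c • v) = c * omega0 n v := by
  simp only [omega0, Prod.smul_fst, Prod.smul_snd, Pi.smul_apply, smul_eq_mul, Finset.mul_sum]
  exact Finset.sum_congr rfl fun i _ => by ring

lemma omega0_sub_left (v v' w : (Fin d → ℝ) × (Fin d → ℝ)) :
    omega0 (v - v') w = omega0 v w - omega0 v' w := by
  simp only [omega0, Prod.fst_sub, Prod.snd_sub, Pi.sub_apply, ← Finset.sum_sub_distrib]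
  exact Finset.sum_congr rfl fun i _ => by ring

lemma omega0_sub_right (n v w : (Fin d → ℝ) × (Fin d → ℝ)) :
    omega0 n (v - w) = omega0 n v - omega0 n w := by
  simp only [omega0, Prod.fst_sub, Prod.snd_sub, Pi.sub_apply, ← Finset.sum_sub_distrib]
  exact Finset.sum_congr rfl fun i _ => by ring

lemma omega0_smul_left (c : ℝ) (v w : (Fin d → ℝ) × (Fin d → ℝ)) :
    omega0 (c • v) w = c * omega0 v w := by
  simp only [omega0, Prod.smul_fst, Prod.smul_snd, Pi.smul_apply, smul_eq_mul, Finset.mul_sum]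
  exact Finset.sum_congr rfl fun i _ => by ring

lemma omega0_self (v : (Fin d → ℝ) × (Fin d → ℝ)) : omega0 v v = 0 :=
  Finset.sum_eq_zero fun i _ => by ring

lemma omega0_antisym (v w : (Fin d → ℝ) × (Fin d → ℝ)) : omega0 v w = -omega0 w v := by
  simp only [omega0, ← Finset.sum_neg_distrib]
  exact Finset.sum_congr rfl fun i _ => by ring

def omegaCLM (n : (Fin d → ℝ) × (Fin d → ℝ)) : ((Fin d → ℝ) × (Fin d → ℝ)) →L[ℝ] ℝ :=
  LinearMap.toContinuousLinearMap
    { toFun := fun v => omega0 n v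
      map_add' := fun v w => omega0_add_right n v w
      map_smul' := fun c v => omega0_smul_right c n v }

@[simp] lemma omegaCLM_apply (n v : (Fin d → ℝ) × (Fin d → ℝ)) :
    omegaCLM n v = omega0 n v := rfl

end helper

theorem ssym_symplectomorphism (d : ℕ) (g g' X Y : G d) :
    omg (fderiv ℝ (fun h : G d => ssym g h) g' X) (fderiv ℝ (fun h : G d => ssym g h) g' Y)
      = omg X Y := by
  have hc0 : HasFDerivAt (fun h : G d => g.1 - h.1)
      (-(ContinuousLinearMap.fst ℝ ℝ (((Fin d → ℝ) × (Fin d → ℝ)) × ℝ))) g' := hasFDerivAt_fst.const_sub _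
  have h1 : HasFDerivAt (fun h : G d => 2 * g.1 - h.1)
      (-(ContinuousLinearMap.fst ℝ ℝ (((Fin d → ℝ) × (Fin d → ℝ)) × ℝ))) g' := hasFDerivAt_fst.const_sub _
  have h2 := (((hc0.cosh).const_mul 2).smul_const g.2.1).sub ((hasFDerivAt_snd (p := g')).fst)
  have ha := ((((hasFDerivAt_fst (p := g')).const_mul 2).const_sub (2 * g.1)).cosh).const_mul (2 * g.2.2)
  have hw : HasFDerivAt (fun h : G d => omega0 g.2.1 h.2.1)
      ((omegaCLM g.2.1).comp ((ContinuousLinearMap.fst ℝ _ ℝ).comp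
        (ContinuousLinearMap.snd ℝ ℝ _))) g' :=
    (omegaCLM g.2.1).hasFDerivAt.comp g' (hasFDerivAt_snd (p := g')).fst
  have h3 := (ha.sub (hasFDerivAt_snd (p := g')).snd).add (hw.mul hc0.sinh)
  have hF : HasFDerivAt (fun h : G d => ssym g h) _ g' := h1.prodMk (h2.prodMk h3)
  rw [hF.fderiv]
  simp only [ContinuousLinearMap.prod_apply, ContinuousLinearMap.comp_apply,
    ContinuousLinearMap.coe_fst', ContinuousLinearMap.coe_snd',
    ContinuousLinearMap.neg_apply, ContinuousLinearMap.smul_apply,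
    ContinuousLinearMap.smulRight_apply, ContinuousLinearMap.add_apply,
    ContinuousLinearMap.sub_apply, omegaCLM_apply, smul_eq_mul, omg]
  simp only [omega0_sub_left, omega0_sub_right, omega0_smul_left, omega0_smul_right, omega0_self,
    omega0_antisym X.2.1 g.2.1, omega0_antisym Y.2.1 g.2.1]
  ring
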